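/- arXiv:2512.18308 — 4 statements merged into one kernel-verified Lean document; each statement's English description precedes it below -/
import Mathlib

section
/- Let τ ∈ ℂ with Im τ > 0. For z ∈ ℂ one has θ₁(z;τ) = 0 if and only if there exist integers m, n with z = m + n·τ; that is, the zeros of θ₁(·;τ) are exactly the points of the lattice ℤ + ℤτ. -/
open Complex

/-- The Jacobi theta function θ₁(z;τ), defined via Mathlib's `jacobiTheta₂` by
θ₁(z;τ) = −i·exp(iπτ/4 + iπz)·jacobiTheta₂(z + (1+τ)/2, τ). -/
noncomputable def theta1 (z τ : ℂ) : ℂ :=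
  -I * Complex.exp (I * (Real.pi : ℂ) * τ / 4 + I * (Real.pi : ℂ) * z) *
    jacobiTheta₂ (z + (1 + τ) / 2) τ

open Real

set_option maxHeartbeats 1000000

lemma termA (k : ℤ) (z τ : ℂ) :
    jacobiTheta₂_term k (z + (1 + τ) / 2) τ =
      cexp ((k : ℂ) * (π * I)) * cexp (((k * (k+1) : ℤ) : ℂ) * (π * I * τ)) *
        cexp (((2 * k : ℤ) : ℂ) * (π * I * z)) := by
  rw [jacobiTheta₂_term, ← Complex.exp_add, ← Complex.exp_add]
  congr 1
  push_cast
  ring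

lemma sumB {τ : ℂ} (hτ : 0 < τ.im) (z : ℂ) :
    jacobiTheta₂ (z + (1 + τ) / 2) τ =
      ∑' n : ℕ, ((-1 : ℂ) ^ n * cexp ((((n : ℤ) * (n + 1) : ℤ) : ℂ) * (π * I * τ)) *
        (cexp (((2 * (n : ℤ) : ℤ) : ℂ) * (π * I * z)) -
          cexp (((-2 * (n : ℤ) - 2 : ℤ) : ℂ) * (π * I * z)))) := by
  have hs : Summable fun k : ℤ ↦ jacobiTheta₂_term k (z + (1 + τ) / 2) τ :=
    (summable_jacobiTheta₂_term_iff _ τ).mpr hτ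
  have hs1 : Summable fun n : ℕ ↦ jacobiTheta₂_term (n : ℤ) (z + (1 + τ) / 2) τ :=
    hs.comp_injective fun a b h ↦ Int.ofNat_inj.mp h
  have hs2 : Summable fun n : ℕ ↦ jacobiTheta₂_term (-((n : ℤ) + 1)) (z + (1 + τ) / 2) τ :=
    hs.comp_injective fun a b h ↦ by simpa using h
  rw [jacobiTheta₂]
  rw [tsum_of_nat_of_neg_add_one (f := fun k : ℤ ↦ jacobiTheta₂_term k (z + (1 + τ) / 2) τ) hs1 hs2]
  rw [← Summable.tsum_add hs1 hs2]
  refine tsum_congr fun n ↦ ?_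
  rw [termA, termA]
  have e1 : cexp (((n : ℤ) : ℂ) * (π * I)) = (-1 : ℂ) ^ n := by
    push_cast
    rw [Complex.exp_nat_mul, Complex.exp_pi_mul_I]
  have e2 : cexp ((((-((n : ℤ) + 1)) : ℤ) : ℂ) * ((π : ℂ) * I)) = -(-1 : ℂ) ^ n := by
    rw [show (((-((n : ℤ) + 1)) : ℤ) : ℂ) * ((π : ℂ) * I) = -(((n + 1 : ℕ) : ℂ) * (π * I)) by
        push_cast; ring,
      Complex.exp_neg, Complex.exp_nat_mul, Complex.exp_pi_mul_I, pow_succ]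
    rw [mul_inv, ← inv_pow, inv_neg, inv_one]; ring
  have e3 : ((-((n : ℤ) + 1)) * (-((n : ℤ) + 1) + 1) : ℤ) = ((n : ℤ) * (n + 1) : ℤ) := by ring
  have e4 : ((2 * (-((n : ℤ) + 1)) : ℤ) : ℂ) = ((-2 * (n : ℤ) - 2 : ℤ) : ℂ) := by push_cast; ring
  rw [e1, e2, e3, e4]
  push_cast
  ring


lemma theta1_add_one (z τ : ℂ) : theta1 (z + 1) τ = -theta1 z τ := by
  unfold theta1
  rw [show z + 1 + (1 + τ) / 2 = (z + (1 + τ) / 2) + 1 by ring, jacobiTheta₂_add_left,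
    show I * (π : ℂ) * τ / 4 + I * π * (z + 1) = (I * π * τ / 4 + I * π * z) + π * I by ring,
    Complex.exp_add, Complex.exp_pi_mul_I]
  ring

lemma theta1_add_tau (z τ : ℂ) :
    theta1 (z + τ) τ = -cexp (-(π : ℂ) * I * τ - 2 * π * I * z) * theta1 z τ := by
  unfold theta1
  rw [show z + τ + (1 + τ) / 2 = (z + (1 + τ) / 2) + τ by ring, jacobiTheta₂_add_left']
  have e2 : cexp (I * (π : ℂ) * τ / 4 + I * π * (z + τ)) *
      cexp (-(π : ℂ) * I * (τ + 2 * (z + (1 + τ) / 2))) =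
      -(cexp (-(π : ℂ) * I * τ - 2 * π * I * z) * cexp (I * π * τ / 4 + I * π * z)) := by
    rw [← Complex.exp_add, ← Complex.exp_add,
      show I * (π : ℂ) * τ / 4 + I * π * (z + τ) + -(π : ℂ) * I * (τ + 2 * (z + (1 + τ) / 2)) =
        (-(π : ℂ) * I * τ - 2 * π * I * z + (I * π * τ / 4 + I * π * z)) + -(π * I) by ring,
      Complex.exp_add, Complex.exp_neg, Complex.exp_pi_mul_I]
    norm_num
  linear_combination (-I * jacobiTheta₂ (z + (1 + τ) / 2) τ) * e2

lemma theta1_zero_translate (τ : ℂ) (m n : ℤ) (z : ℂ) :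
    theta1 (z + m + n * τ) τ = 0 ↔ theta1 z τ = 0 := by
  let G : AddSubgroup ℂ :=
  { carrier := {w | ∀ y : ℂ, theta1 (y + w) τ = 0 ↔ theta1 y τ = 0}
    zero_mem' := fun y ↦ by rw [add_zero]
    add_mem' := by
      intro a b ha hb y
      rw [show y + (a + b) = (y + a) + b by ring, hb (y + a), ha y]
    neg_mem' := by
      intro a ha y
      have := ha (y + -a)
      rw [show y + -a + a = y by ring] at this
      exact this.symm }
  have h1 : (1 : ℂ) ∈ G := by
    intro y
    rw [theta1_add_one, neg_eq_zero]
  have h2 : τ ∈ G := by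
    intro y
    rw [theta1_add_tau, neg_mul, neg_eq_zero, mul_eq_zero]
    simp [Complex.exp_ne_zero]
  have hm : (m : ℂ) + n * τ ∈ G := by
    have := G.add_mem (G.zsmul_mem h1 m) (G.zsmul_mem h2 n)
    simpa [zsmul_eq_mul] using this
  have := hm z
  rwa [← add_assoc] at this

lemma theta1_zero_zero {τ : ℂ} (hτ : 0 < τ.im) : theta1 0 τ = 0 := by
  unfold theta1
  rw [sumB hτ 0]
  have : ∀ n : ℕ, (-1 : ℂ) ^ n * cexp ((((n : ℤ) * (n + 1) : ℤ) : ℂ) * (π * I * τ)) *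
      (cexp (((2 * (n : ℤ) : ℤ) : ℂ) * (π * I * (0:ℂ))) -
        cexp (((-2 * (n : ℤ) - 2 : ℤ) : ℂ) * (π * I * (0:ℂ)))) = 0 := by
    intro n
    simp
  rw [tsum_congr this, tsum_zero, mul_zero]

lemma theta1_lattice_zero {τ : ℂ} (hτ : 0 < τ.im) (m n : ℤ) :
    theta1 ((m : ℂ) + n * τ) τ = 0 := by
  have := (theta1_zero_translate τ m n 0).mpr (theta1_zero_zero hτ)
  rwa [zero_add] at this

lemma jt2_tau_add_one (z τ : ℂ) : jacobiTheta₂ z (τ + 1) = jacobiTheta₂ (z + 1/2) τ := by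
  refine tsum_congr fun n ↦ ?_
  rw [jacobiTheta₂_term, jacobiTheta₂_term]
  obtain ⟨k, hk⟩ := Int.even_mul_succ_self (n - 1)
  have hk' : (n : ℂ) ^ 2 - (n : ℂ) = 2 * (k : ℂ) := by
    have : n ^ 2 - n = 2 * k := by linear_combination hk
    exact_mod_cast this
  rw [show 2 * (π : ℂ) * I * n * z + π * I * n ^ 2 * (τ + 1) =
      (2 * (π : ℂ) * I * n * (z + 1/2) + π * I * n ^ 2 * τ) + ((k : ℂ) * (2 * π * I)) by
        linear_combination (π : ℂ) * I * hk',
    Complex.exp_add, Complex.exp_int_mul_two_pi_mul_I, mul_one]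

lemma theta1_tau_add_one (z τ : ℂ) : theta1 z (τ + 1) = cexp ((π : ℂ) * I / 4) * theta1 z τ := by
  unfold theta1
  rw [jt2_tau_add_one, show z + (1 + (τ + 1)) / 2 + 1/2 = (z + (1 + τ) / 2) + 1 by ring,
    jacobiTheta₂_add_left,
    show I * (π : ℂ) * (τ + 1) / 4 + I * π * z = ((π : ℂ) * I / 4) + (I * π * τ / 4 + I * π * z) by
      ring,
    Complex.exp_add]
  ring

lemma theta1_zero_tau_add_int (z τ : ℂ) (j : ℤ) :
    theta1 z (τ + j) = 0 ↔ theta1 z τ = 0 := by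
  induction j using Int.induction_on with
  | zero => simp
  | succ i ih =>
    have e : theta1 z (τ + ((i + 1 : ℤ) : ℂ)) = cexp ((π : ℂ) * I / 4) * theta1 z (τ + (i : ℤ)) := by
      push_cast
      rw [show τ + ((i : ℂ) + 1) = (τ + (i : ℂ)) + 1 by ring, theta1_tau_add_one]
    rw [e, mul_eq_zero]
    simp only [Complex.exp_ne_zero, false_or]
    exact ih
  | pred i ih =>
    have e : theta1 z (τ + ((-i : ℤ) : ℂ)) =
        cexp ((π : ℂ) * I / 4) * theta1 z (τ + ((-i - 1 : ℤ) : ℂ)) := by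
      push_cast
      rw [show τ + -(i : ℂ) = (τ + (-(i : ℂ) - 1)) + 1 by ring, theta1_tau_add_one]
    rw [e, mul_eq_zero] at ih
    simp only [Complex.exp_ne_zero, false_or] at ih
    rw [ih]

lemma lattice_tau_add_int (z τ : ℂ) (j : ℤ) :
    (∃ m n : ℤ, z = (m : ℂ) + n * (τ + j)) ↔ ∃ m n : ℤ, z = (m : ℂ) + n * τ := by
  constructor
  · rintro ⟨m, n, rfl⟩
    exact ⟨m + n * j, n, by push_cast; ring⟩
  · rintro ⟨m, n, rfl⟩
    exact ⟨m - n * j, n, by push_cast; ring⟩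

lemma theta1_zero_iff_jt2 (z τ : ℂ) :
    theta1 z τ = 0 ↔ jacobiTheta₂ (z + (1 + τ) / 2) τ = 0 := by
  unfold theta1
  rw [mul_eq_zero, mul_eq_zero]
  simp [Complex.exp_ne_zero, I_ne_zero]

lemma jt2_zero_S {τ : ℂ} (hτ : 0 < τ.im) (w : ℂ) :
    jacobiTheta₂ w τ = 0 ↔ jacobiTheta₂ (w / τ) (-1 / τ) = 0 := by
  have h0 : τ ≠ 0 := fun h ↦ by simp [h] at hτ
  have hA : (1 : ℂ) / (-I * τ) ^ (1 / 2 : ℂ) * cexp (-(π : ℂ) * I * w ^ 2 / τ) ≠ 0 := by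
    refine mul_ne_zero (one_div_ne_zero ?_) (Complex.exp_ne_zero _)
    rw [Ne, Complex.cpow_eq_zero_iff]
    push_neg
    intro h
    exact absurd h (mul_ne_zero (neg_ne_zero.mpr I_ne_zero) h0)
  rw [jacobiTheta₂_functional_equation w τ, mul_eq_zero, or_iff_right hA]

lemma theta1_zero_S {τ : ℂ} (hτ : 0 < τ.im) (z : ℂ) :
    theta1 z τ = 0 ↔ theta1 (z / τ) (-1 / τ) = 0 := by
  have h0 : τ ≠ 0 := fun h ↦ by simp [h] at hτ
  rw [theta1_zero_iff_jt2, theta1_zero_iff_jt2, jt2_zero_S hτ]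
  have e1 : z / τ + (1 + -1 / τ) / 2 = (z + (1 + τ) / 2) / τ + (-1 / τ) := by
    field_simp
    ring
  rw [e1, jacobiTheta₂_add_left', mul_eq_zero, or_iff_right (Complex.exp_ne_zero _)]

lemma lattice_S {τ : ℂ} (hτ : 0 < τ.im) (z : ℂ)
    (h : ∃ m n : ℤ, z / τ = (m : ℂ) + n * (-1 / τ)) : ∃ m n : ℤ, z = (m : ℂ) + n * τ := by
  have h0 : τ ≠ 0 := fun h ↦ by simp [h] at hτ
  obtain ⟨m, n, hmn⟩ := h
  refine ⟨-n, m, ?_⟩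
  have := congrArg (· * τ) hmn
  field_simp at this
  rw [this]
  push_cast
  ring


lemma three_pow (n : ℕ) : (2 * n + 1 : ℝ) ≤ 3 ^ n := by
  induction n with
  | zero => norm_num
  | succ k ih =>
    have h1 : (1 : ℝ) ≤ 3 ^ k := one_le_pow₀ (by norm_num)
    push_cast [pow_succ] at *
    nlinarith

lemma exp_lt_sixth {t : ℝ} (ht : 43 / 50 ≤ t) : Real.exp (-π * t) < 1 / 6 := by
  have hπ : (3 : ℝ) ≤ π := by linarith [Real.pi_gt_three]
  have h1 : (2.58 : ℝ) ≤ π * t :=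
    le_trans (by norm_num) (mul_le_mul hπ ht (by norm_num) (by positivity))
  have h2 : (6 : ℝ) < Real.exp (π * t) := by
    have e1 : Real.exp (2.58) ≤ Real.exp (π * t) := Real.exp_le_exp.mpr h1
    have e2 : Real.exp (0.645 : ℝ) ^ (4 : ℕ) = Real.exp (2.58) := by
      rw [← Real.exp_nat_mul]; norm_num
    have e3 : (1.645 : ℝ) ≤ Real.exp (0.645 : ℝ) := by
      have := Real.add_one_le_exp (0.645 : ℝ); linarith
    have e4 : (6 : ℝ) < (1.645 : ℝ) ^ (4 : ℕ) := by norm_num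
    have e5 : (1.645 : ℝ) ^ (4 : ℕ) ≤ Real.exp (0.645 : ℝ) ^ (4 : ℕ) :=
      pow_le_pow_left₀ (by norm_num) e3 4
    linarith
  rw [show -π * t = -(π * t) by ring, Real.exp_neg]
  have h6 : (0 : ℝ) < 6 := by norm_num
  calc (Real.exp (π * t))⁻¹ < 6⁻¹ := by
        apply inv_strictAnti₀ h6 h2
    _ = 1 / 6 := by norm_num

lemma theta1_ne_zero_est {τ : ℂ} (hτ : 0 < τ.im) (hr : Real.exp (-π * τ.im) < 1 / 6)
    (z : ℂ) (him : |z.im| ≤ τ.im / 2) (hz : cexp (-2 * (π : ℂ) * I * z) ≠ 1) :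
    theta1 z τ ≠ 0 := by
  set t : ℝ := τ.im with htdef
  set r : ℝ := Real.exp (-π * t) with hrdef
  have hrpos : 0 < r := Real.exp_pos _
  have ht0 : 0 < t := hτ
  set h : ℕ → ℂ := fun n ↦ (-1 : ℂ) ^ n * cexp ((((n : ℤ) * (n + 1) : ℤ) : ℂ) * (π * I * τ)) *
      (cexp (((2 * (n : ℤ) : ℤ) : ℂ) * (π * I * z)) -
        cexp (((-2 * (n : ℤ) - 2 : ℤ) : ℂ) * (π * I * z))) with hhdef
  -- h 0
  have hh0 : h 0 = 1 - cexp (-2 * (π : ℂ) * I * z) := by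
    rw [hhdef]
    norm_num
    congr 1
    ring
  have hh0ne : h 0 ≠ 0 := by
    rw [hh0, sub_ne_zero]
    exact fun hE ↦ hz hE.symm
  have hh0pos : 0 < ‖h 0‖ := norm_pos_iff.mpr hh0ne
  -- the key termwise bound
  have key : ∀ n : ℕ, ‖h n‖ ≤ (2 * n + 1 : ℝ) * r ^ (n ^ 2) * ‖h 0‖ := by
    intro n
    -- telescoping factorization
    set g : ℕ → ℂ := fun j ↦ cexp (((2 * (n : ℤ) - 2 * j : ℤ) : ℂ) * (π * I * z)) with hgdef
    have hfact : cexp (((2 * (n : ℤ) : ℤ) : ℂ) * (π * I * z)) -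
        cexp (((-2 * (n : ℤ) - 2 : ℤ) : ℂ) * (π * I * z)) =
        (1 - cexp (-2 * (π : ℂ) * I * z)) * ∑ j ∈ Finset.range (2 * n + 1), g j := by
      have step : ∀ j : ℕ, (1 - cexp (-2 * (π : ℂ) * I * z)) * g j = g j - g (j + 1) := by
        intro j
        rw [hgdef]
        simp only [sub_mul, one_mul]
        congr 1
        rw [← Complex.exp_add]
        congr 1
        push_cast
        ring
      rw [Finset.mul_sum]
      rw [Finset.sum_congr rfl fun j _ ↦ step j, Finset.sum_range_sub']
      rw [hgdef]
      congr 2 <;> push_cast <;> ring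
    have hnorm_g : ∀ j ∈ Finset.range (2 * n + 1), ‖g j‖ ≤ Real.exp (n * (π * t)) := by
      intro j hj
      have hj' : (j : ℝ) ≤ 2 * n := by
        have := Finset.mem_range.mp hj
        exact_mod_cast Nat.lt_succ_iff.mp this
      rw [hgdef]
      simp only [Complex.norm_exp]
      apply Real.exp_le_exp.mpr
      have hre : ((((2 * (n : ℤ) - 2 * j : ℤ) : ℂ)) * ((π : ℂ) * I * z)).re =
          (2 * (n : ℝ) - 2 * j) * (-(π * z.im)) := by
        rw [show (((2 * (n : ℤ) - 2 * j : ℤ) : ℂ)) = (((2 * (n : ℝ) - 2 * j : ℝ) : ℂ)) by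
          push_cast; ring]
        rw [Complex.re_ofReal_mul]
        congr 1
        simp [Complex.mul_re, Complex.mul_im]
      rw [hre]
      have habs : |(2 * (n : ℝ) - 2 * j)| ≤ 2 * n := by
        rw [abs_le]
        constructor <;> nlinarith [Nat.cast_nonneg (α := ℝ) j, Nat.cast_nonneg (α := ℝ) n]
      calc (2 * (n : ℝ) - 2 * j) * (-(π * z.im))
          ≤ |(2 * (n : ℝ) - 2 * j) * (-(π * z.im))| := le_abs_self _
        _ = |(2 * (n : ℝ) - 2 * j)| * (π * |z.im|) := by
            rw [abs_mul, abs_neg, abs_mul, _root_.abs_of_nonneg Real.pi_pos.le]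
        _ ≤ (2 * n) * (π * (t / 2)) := by
            apply mul_le_mul habs (by nlinarith [Real.pi_pos]) (by positivity) (by positivity)
        _ = n * (π * t) := by ring
    have hq : ‖cexp ((((n : ℤ) * (n + 1) : ℤ) : ℂ) * ((π : ℂ) * I * τ))‖ =
        Real.exp (-((n : ℝ) * (n + 1)) * (π * t)) := by
      simp only [Complex.norm_exp]
      congr 1
      rw [show ((((n : ℤ) * (n + 1) : ℤ) : ℂ)) = ((((n : ℝ) * (n + 1) : ℝ) : ℂ)) by
        push_cast; ring]
      rw [Complex.re_ofReal_mul]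
      have : ((π : ℂ) * I * τ).re = -(π * t) := by
        simp [Complex.mul_re, Complex.mul_im, htdef]
      rw [this]
      ring
    -- assemble
    calc ‖h n‖ = ‖cexp ((((n : ℤ) * (n + 1) : ℤ) : ℂ) * ((π : ℂ) * I * τ))‖ *
          (‖(1 - cexp (-2 * (π : ℂ) * I * z))‖ * ‖∑ j ∈ Finset.range (2 * n + 1), g j‖) := by
          simp only [hhdef]
          rw [hfact]
          simp only [norm_mul, norm_pow, norm_neg, norm_one, one_pow, one_mul]
      _ ≤ Real.exp (-((n : ℝ) * (n + 1)) * (π * t)) *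
          (‖h 0‖ * ((2 * n + 1 : ℝ) * Real.exp (n * (π * t)))) := by
          rw [hq, ← hh0]
          apply mul_le_mul_of_nonneg_left _ (Real.exp_pos _).le
          apply mul_le_mul_of_nonneg_left _ (norm_nonneg _)
          calc ‖∑ j ∈ Finset.range (2 * n + 1), g j‖
              ≤ ∑ j ∈ Finset.range (2 * n + 1), ‖g j‖ := norm_sum_le _ _
            _ ≤ (2 * n + 1 : ℝ) * Real.exp (n * (π * t)) := by
                have := Finset.sum_le_card_nsmul (Finset.range (2 * n + 1)) (fun j ↦ ‖g j‖)
                  (Real.exp (n * (π * t))) hnorm_g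
                simpa [Finset.card_range, nsmul_eq_mul] using this
      _ = (2 * n + 1 : ℝ) * r ^ (n ^ 2) * ‖h 0‖ := by
          rw [hrdef, ← Real.exp_nat_mul]
          have hE : rexp (-((n : ℝ) * (n + 1)) * (π * t)) * rexp ((n : ℝ) * (π * t)) =
              rexp ((n ^ 2 : ℕ) * (-π * t)) := by
            rw [← Real.exp_add]; congr 1; push_cast; ring
          linear_combination ((2 * (n : ℝ) + 1) * ‖h 0‖) * hE
  have hr3' : (0:ℝ) ≤ 3 * r := by positivity
  have bound2 : ∀ n : ℕ, ‖h n‖ ≤ (3 * r) ^ n * ‖h 0‖ := by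
    intro n
    refine (key n).trans (mul_le_mul_of_nonneg_right ?_ (norm_nonneg _))
    have h1 : r ^ (n ^ 2) ≤ r ^ n :=
      pow_le_pow_of_le_one hrpos.le (by linarith) (Nat.le_self_pow (by norm_num) n)
    calc (2 * n + 1 : ℝ) * r ^ (n ^ 2) ≤ 3 ^ n * r ^ n :=
          mul_le_mul (three_pow n) h1 (by positivity) (by positivity)
      _ = (3 * r) ^ n := (mul_pow 3 r n).symm
  have hsum_h : Summable h := by
    apply Summable.of_norm
    apply Summable.of_nonneg_of_le (fun n ↦ norm_nonneg _) bound2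
    exact (summable_geometric_of_lt_one hr3' (by linarith)).mul_right _
  have hsplit : ∑' n, h n = h 0 + ∑' n : ℕ, h (n + 1) := Summable.tsum_eq_zero_add hsum_h
  have hgeo : HasSum (fun n : ℕ ↦ (3 * r) ^ (n + 1) * ‖h 0‖) ((3 * r) * (1 - 3 * r)⁻¹ * ‖h 0‖) := by
    have hG := ((hasSum_geometric_of_lt_one hr3' (by linarith)).mul_left (3 * r)).mul_right ‖h 0‖
    have e : (fun n : ℕ ↦ (3 * r) ^ (n + 1) * ‖h 0‖) = fun i ↦ 3 * r * (3 * r) ^ i * ‖h 0‖ := by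
      funext n; rw [pow_succ']
    rw [e]; exact hG
  have htail : ‖∑' n : ℕ, h (n + 1)‖ ≤ (3 * r) * (1 - 3 * r)⁻¹ * ‖h 0‖ :=
    tsum_of_norm_bounded hgeo fun n ↦ bound2 (n + 1)
  have hinv : (1 - 3 * r)⁻¹ ≤ 2 := by
    have hpos : (1/2 : ℝ) ≤ 1 - 3 * r := by linarith
    calc (1 - 3 * r)⁻¹ ≤ ((1:ℝ)/2)⁻¹ := by
          apply inv_anti₀ (by norm_num) hpos
      _ = 2 := by norm_num
  have hne : (∑' n, h n) ≠ 0 := by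
    intro h0eq
    have he : h 0 = -∑' n : ℕ, h (n + 1) := by
      rw [hsplit] at h0eq
      exact eq_neg_of_add_eq_zero_left h0eq
    have h2 : ‖h 0‖ ≤ (3 * r) * (1 - 3 * r)⁻¹ * ‖h 0‖ :=
      le_trans (le_of_eq (by rw [he, norm_neg])) htail
    have h3 : (3 * r) * (1 - 3 * r)⁻¹ ≤ 6 * r := by
      have := mul_le_mul_of_nonneg_left hinv hr3'
      linarith
    have h4 : (3 * r) * (1 - 3 * r)⁻¹ * ‖h 0‖ ≤ 6 * r * ‖h 0‖ :=
      mul_le_mul_of_nonneg_right h3 (norm_nonneg _)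
    have h5 : 6 * r * ‖h 0‖ < 1 * ‖h 0‖ := by
      apply mul_lt_mul_of_pos_right _ hh0pos
      linarith
    linarith
  unfold theta1
  rw [sumB hτ z]
  exact mul_ne_zero (mul_ne_zero (neg_ne_zero.mpr I_ne_zero) (Complex.exp_ne_zero _)) hne

lemma lattice_of_big {τ : ℂ} (hτ : 0 < τ.im) (ht : (43/50 : ℝ) ≤ τ.im) {z : ℂ}
    (hz : theta1 z τ = 0) : ∃ m n : ℤ, z = (m : ℂ) + n * τ := by
  set n : ℤ := round (z.im / τ.im) with hn
  set z₀ : ℂ := z - n * τ with hz0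
  have him : |z₀.im| ≤ τ.im / 2 := by
    have e : z₀.im = (z.im / τ.im - n) * τ.im := by
      field_simp [hz0, Complex.sub_im, Complex.mul_im]
      simp only [hz0, Complex.sub_im, Complex.mul_im, Complex.intCast_re, Complex.intCast_im, zero_mul, add_zero]
      ring
    rw [e, abs_mul, _root_.abs_of_pos hτ]
    have h1 : |z.im / τ.im - n| ≤ 1/2 := abs_sub_round (z.im / τ.im)
    nlinarith [abs_nonneg (z.im / τ.im - (n:ℝ))]
  have hz0zero : theta1 z₀ τ = 0 := by
    have h := theta1_zero_translate τ 0 n z₀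
    rw [show z₀ + ((0:ℤ) : ℂ) + (n : ℂ) * τ = z by rw [hz0]; push_cast; ring] at h
    exact h.mp hz
  by_cases hcase : cexp (-2 * (π : ℂ) * I * z₀) = 1
  · rw [Complex.exp_eq_one_iff] at hcase
    obtain ⟨k, hk⟩ := hcase
    have hπI : (2 : ℂ) * π * I ≠ 0 :=
      mul_ne_zero (mul_ne_zero two_ne_zero (Complex.ofReal_ne_zero.mpr Real.pi_ne_zero)) I_ne_zero
    have h' : (-z₀) * (2 * (π : ℂ) * I) = (k : ℂ) * (2 * (π : ℂ) * I) := by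
      linear_combination hk
    have hz₀ : z₀ = -(k : ℂ) := by
      have := mul_right_cancel₀ hπI h'
      linear_combination -this
    refine ⟨-k, n, ?_⟩
    have : z = z₀ + (n : ℂ) * τ := by rw [hz0]; ring
    rw [this, hz₀]
    push_cast
    ring
  · exact absurd hz0zero (theta1_ne_zero_est hτ (exp_lt_sixth ht) z₀ him hcase)

lemma descent : ∀ N : ℕ, ∀ τ : ℂ, 0 < τ.im → (43/50 : ℝ) ≤ (1250/1237 : ℝ) ^ N * τ.im →
    ∀ z : ℂ, theta1 z τ = 0 → ∃ m n : ℤ, z = (m : ℂ) + n * τ := by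
  intro N
  induction N with
  | zero =>
    intro τ hτ hbig z hz
    rw [pow_zero, one_mul] at hbig
    exact lattice_of_big hτ hbig hz
  | succ N ih =>
    intro τ hτ hbig z hz
    by_cases hbig' : (43/50 : ℝ) ≤ τ.im
    · exact lattice_of_big hτ hbig' hz
    push_neg at hbig'
    set k : ℤ := round τ.re with hk
    set τ₁ : ℂ := τ - k with hτ₁
    have hτ₁im : τ₁.im = τ.im := by simp [hτ₁]
    have hτ₁pos : 0 < τ₁.im := by rw [hτ₁im]; exact hτ
    have hre : |τ₁.re| ≤ 1/2 := by
      have : τ₁.re = τ.re - round τ.re := by simp [hτ₁, hk]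
      rw [this]
      exact abs_sub_round τ.re
    have hns : Complex.normSq τ₁ ≤ 1237/1250 := by
      rw [Complex.normSq_apply]
      have h1 : τ₁.re * τ₁.re ≤ 1/4 := by nlinarith [abs_nonneg τ₁.re, abs_mul_abs_self τ₁.re]
      have h2 : τ₁.im * τ₁.im ≤ (43/50) * (43/50) := by rw [hτ₁im]; nlinarith
      linarith
    have hns0 : 0 < Complex.normSq τ₁ := by
      apply Complex.normSq_pos.mpr
      intro h
      rw [h] at hτ₁im
      simp at hτ₁im
      exact absurd hτ₁im.symm (ne_of_gt hτ)
    set σ : ℂ := -1 / τ₁ with hσ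
    have hσim : σ.im = τ.im / Complex.normSq τ₁ := by
      rw [hσ, neg_div, one_div, Complex.neg_im, Complex.inv_im, hτ₁im]
      ring
    have hσpos : 0 < σ.im := by rw [hσim]; positivity
    have hstep : (43/50 : ℝ) ≤ (1250/1237 : ℝ) ^ N * σ.im := by
      rw [hσim]
      have hmono : (1250/1237 : ℝ) * τ.im ≤ τ.im / Complex.normSq τ₁ := by
        rw [le_div_iff₀ hns0]
        nlinarith
      calc (43/50 : ℝ) ≤ (1250/1237 : ℝ) ^ (N + 1) * τ.im := hbig
        _ = (1250/1237 : ℝ) ^ N * ((1250/1237 : ℝ) * τ.im) := by ring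
        _ ≤ (1250/1237 : ℝ) ^ N * (τ.im / Complex.normSq τ₁) :=
            mul_le_mul_of_nonneg_left hmono (by positivity)
    have hzτ₁ : theta1 z τ₁ = 0 := by
      have h := theta1_zero_tau_add_int z τ₁ k
      rw [show τ₁ + (k : ℂ) = τ by rw [hτ₁]; ring] at h
      exact h.mp hz
    have hzσ : theta1 (z / τ₁) σ = 0 := by
      rw [hσ]
      exact (theta1_zero_S hτ₁pos z).mp hzτ₁
    obtain ⟨m', n', hmn⟩ := ih σ hσpos hstep (z / τ₁) hzσ
    obtain ⟨m, n, hz'⟩ := lattice_S hτ₁pos z ⟨m', n', by rw [← hσ]; exact hmn⟩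
    refine ⟨m - n * k, n, ?_⟩
    rw [hz', hτ₁]
    push_cast
    ring


/-- The zeros of θ₁(·;τ) are exactly the lattice points ℤ + ℤτ. -/
theorem theta1_zero_iff (τ : ℂ) (hτ : 0 < τ.im) (z : ℂ) :
    theta1 z τ = 0 ↔ ∃ m n : ℤ, z = (m : ℂ) + (n : ℂ) * τ := by
  constructor
  · intro hz
    obtain ⟨N, hN⟩ := pow_unbounded_of_one_lt ((43/50) / τ.im)
      (show (1:ℝ) < 1250/1237 by norm_num)
    apply descent N τ hτ _ z hz
    have := (div_lt_iff₀ hτ).mp hN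
    nlinarith
  · rintro ⟨m, n, rfl⟩
    exact theta1_lattice_zero hτ m n
end

section
/- Let τ ∈ ℂ with Im τ > 0 and let m, n be integers. Then the complex derivative of the function z ↦ θ₁(z;τ) at the lattice point z = m + n·τ is nonzero; in particular every zero of θ₁(·;τ) is simple. -/
open Complex

section ThetaAux
open Real


lemma theta2_half_zero (τ : ℂ) : jacobiTheta₂ ((1 + τ) / 2) τ = 0 := by
  have key : ∀ n : ℤ, jacobiTheta₂_term (-(n + 1)) ((1 + τ) / 2) τ
      = - jacobiTheta₂_term n ((1 + τ) / 2) τ := by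
    intro n
    rw [jacobiTheta₂_term, jacobiTheta₂_term]
    have h : (2 * ↑π * I * (-(n + 1) : ℤ) * ((1 + τ) / 2) + ↑π * I * ((-(n + 1) : ℤ)) ^ 2 * τ)
        = (2 * ↑π * I * (n : ℂ) * ((1 + τ) / 2) + ↑π * I * (n : ℂ) ^ 2 * τ)
          + ((-(2 * n + 1) : ℤ) : ℂ) * (↑π * I) := by push_cast; ring
    rw [h, Complex.exp_add, Complex.exp_int_mul, Complex.exp_pi_mul_I,
      Odd.neg_one_zpow ⟨-(n + 1), by ring⟩, mul_neg_one]
  have h2 : jacobiTheta₂ ((1 + τ) / 2) τ = - jacobiTheta₂ ((1 + τ) / 2) τ := by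
    conv_lhs => rw [jacobiTheta₂, ← ((Equiv.addRight (1 : ℤ)).trans (Equiv.neg ℤ)).tsum_eq]
    simp only [Equiv.trans_apply, Equiv.coe_addRight, Equiv.neg_apply]
    simp_rw [key, tsum_neg]
    rw [← jacobiTheta₂]
  linear_combination h2 / 2

lemma theta2_int_add (τ : ℂ) (m : ℤ) : ∀ z : ℂ, jacobiTheta₂ (z + m) τ = jacobiTheta₂ z τ := by
  induction m using Int.induction_on with
  | zero => simp
  | succ k ih => intro z
                 have : z + ((k : ℤ) + 1 : ℤ) = (z + (k : ℤ)) + 1 := by push_cast; ring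
                 rw [this, jacobiTheta₂_add_left, ih]
  | pred k ih => intro z
                 have h := jacobiTheta₂_add_left (z + ((-(k : ℤ) - 1 : ℤ) : ℂ)) τ
                 have e : z + ((-(k : ℤ) - 1 : ℤ) : ℂ) + 1 = z + ((-(k : ℤ) : ℤ) : ℂ) := by
                   push_cast; ring
                 rw [e, ih] at h
                 rw [← h]

lemma theta2'_int_add (τ : ℂ) (m : ℤ) : ∀ z : ℂ, jacobiTheta₂' (z + m) τ = jacobiTheta₂' z τ := by
  induction m using Int.induction_on with
  | zero => simp
  | succ k ih => intro z
                 have : z + ((k : ℤ) + 1 : ℤ) = (z + (k : ℤ)) + 1 := by push_cast; ring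
                 rw [this, jacobiTheta₂'_add_left, ih]
  | pred k ih => intro z
                 have h := jacobiTheta₂'_add_left (z + ((-(k : ℤ) - 1 : ℤ) : ℂ)) τ
                 have e : z + ((-(k : ℤ) - 1 : ℤ) : ℂ) + 1 = z + ((-(k : ℤ) : ℤ) : ℂ) := by
                   push_cast; ring
                 rw [e, ih] at h
                 rw [← h]


lemma theta2_lattice (τ : ℂ) (k : ℤ) :
    jacobiTheta₂ ((1 + τ) / 2 + k * τ) τ = 0 ∧
    ∃ c : ℂ, c ≠ 0 ∧ jacobiTheta₂' ((1 + τ) / 2 + k * τ) τ = c * jacobiTheta₂' ((1 + τ) / 2) τ := by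
  induction k using Int.induction_on with
  | zero => simpa using ⟨theta2_half_zero τ, 1, one_ne_zero, (one_mul _).symm⟩
  | succ k ih =>
    obtain ⟨h0, c, hc, hc'⟩ := ih
    set w : ℂ := (1 + τ) / 2 + (k : ℤ) * τ with hw
    have e : (1 + τ) / 2 + ((k : ℤ) + 1 : ℤ) * τ = w + τ := by push_cast [hw]; ring
    constructor
    · rw [e, jacobiTheta₂_add_left', h0, mul_zero]
    · refine ⟨cexp (-π * I * (τ + 2 * w)) * c, mul_ne_zero (Complex.exp_ne_zero _) hc, ?_⟩
      rw [e, jacobiTheta₂'_add_left', h0, mul_zero, sub_zero, hc']; ring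
  | pred k ih =>
    obtain ⟨h0, c, hc, hc'⟩ := ih
    set w : ℂ := (1 + τ) / 2 + ((-(k : ℤ) - 1 : ℤ)) * τ with hw
    have e : (1 + τ) / 2 + ((-(k : ℤ) : ℤ)) * τ = w + τ := by push_cast [hw]; ring
    rw [e] at h0 hc'
    rw [jacobiTheta₂_add_left'] at h0
    rw [jacobiTheta₂'_add_left'] at hc'
    have hz : jacobiTheta₂ w τ = 0 :=
      (mul_eq_zero.mp h0).resolve_left (Complex.exp_ne_zero _)
    rw [hz, mul_zero, sub_zero] at hc'
    refine ⟨hz, (cexp (-π * I * (τ + 2 * w)))⁻¹ * c, mul_ne_zero (inv_ne_zero (Complex.exp_ne_zero _)) hc, ?_⟩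
    rw [mul_assoc, ← hc', inv_mul_cancel_left₀ (Complex.exp_ne_zero _)]

noncomputable def Gfun (τ : ℂ) : ℂ := jacobiTheta₂' ((1 + τ) / 2) τ

lemma theta2'_tau_add_one (z τ : ℂ) :
    jacobiTheta₂' z (τ + 1) = jacobiTheta₂' (z + 1 / 2) τ := by
  rw [jacobiTheta₂', jacobiTheta₂']
  refine tsum_congr fun n => ?_
  rw [jacobiTheta₂'_term, jacobiTheta₂'_term, jacobiTheta₂_term, jacobiTheta₂_term]
  have h : 2 * ↑π * I * (n : ℂ) * z + ↑π * I * (n : ℂ) ^ 2 * (τ + 1)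
      = (2 * ↑π * I * (n : ℂ) * (z + 1 / 2) + ↑π * I * (n : ℂ) ^ 2 * τ)
        + ((n * (n - 1) / 2 : ℤ) : ℂ) * (2 * ↑π * I) := by
    obtain ⟨s, hs⟩ := Int.even_mul_succ_self (n - 1)
    have hs' : n * (n - 1) = 2 * s := by linarith [hs]
    have h2 : ((n * (n - 1) / 2 : ℤ) : ℂ) = ((s : ℤ) : ℂ) := by
      rw [hs', Int.mul_ediv_cancel_left _ (by norm_num)]
    rw [h2]
    have hsc : (n : ℂ) * ((n : ℂ) - 1) = 2 * (s : ℂ) := by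
      have := congrArg (Int.cast : ℤ → ℂ) hs'
      push_cast at this; exact this
    linear_combination (↑π * I) * hsc
  rw [h, Complex.exp_add, Complex.exp_int_mul_two_pi_mul_I, mul_one]

lemma Gfun_add_one (τ : ℂ) : Gfun (τ + 1) = Gfun τ := by
  rw [Gfun, theta2'_tau_add_one]
  have e : (1 + (τ + 1)) / 2 + 1 / 2 = (1 + τ) / 2 + 1 := by ring
  rw [e, jacobiTheta₂'_add_left, Gfun]

lemma Gfun_int_add (τ : ℂ) (m : ℤ) : Gfun (τ + m) = Gfun τ := by
  induction m using Int.induction_on with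
  | zero => simp
  | succ k ih => have : τ + ((k : ℤ) + 1 : ℤ) = (τ + (k : ℤ)) + 1 := by push_cast; ring
                 rw [this, Gfun_add_one, ih]
  | pred k ih => have h := Gfun_add_one (τ + ((-(k : ℤ) - 1 : ℤ) : ℂ))
                 have e : τ + ((-(k : ℤ) - 1 : ℤ) : ℂ) + 1 = τ + ((-(k : ℤ) : ℤ) : ℂ) := by
                   push_cast; ring
                 rw [e, ih] at h
                 rw [← h]



lemma Gfun_S_step (τ : ℂ) (hτ : 0 < τ.im) (h : Gfun (-1 / τ) ≠ 0) : Gfun τ ≠ 0 := by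
  have hτ0 : τ ≠ 0 := fun h0 => by simp [h0] at hτ
  have key := jacobiTheta₂'_functional_equation ((1 + τ) / 2) τ
  have hz : (1 + τ) / 2 / τ = (1 + (-1 / τ)) / 2 + (-1 : ℤ) * (-1 / τ) := by
    push_cast; field_simp; ring
  obtain ⟨h0, c, hc, hc'⟩ := theta2_lattice (-1 / τ) (-1)
  rw [Gfun, key, hz, h0, hc', mul_zero, sub_zero]
  have hI : (-I * τ) ≠ 0 := mul_ne_zero (neg_ne_zero.mpr I_ne_zero) hτ0
  have hpow : ((-I * τ) ^ (1 / 2 : ℂ)) ≠ 0 := by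
    rw [Ne, Complex.cpow_eq_zero_iff]
    tauto
  apply mul_ne_zero
  apply div_ne_zero _ hτ0
  · exact mul_ne_zero (div_ne_zero one_ne_zero hpow) (Complex.exp_ne_zero _)
  · exact mul_ne_zero hc h


lemma two_n_three_le (n : ℕ) : (2 * n + 3 : ℝ) ≤ 3 ^ (n + 1) := by
  induction n with
  | zero => norm_num
  | succ k ih =>
    have h1 : (1 : ℝ) ≤ 3 ^ (k + 1) := one_le_pow₀ (by norm_num)
    have : (3 : ℝ) ^ (k + 1 + 1) = 3 * 3 ^ (k + 1) := by ring
    push_cast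
    push_cast at ih
    nlinarith

lemma Gfun_base (τ : ℂ) (ht : 1 / 2 ≤ τ.im) : Gfun τ ≠ 0 := by
  have hτ : 0 < τ.im := lt_of_lt_of_le (by norm_num) ht
  set f : ℤ → ℂ := fun n => jacobiTheta₂'_term n ((1 + τ) / 2) τ with hf
  have hS : HasSum f (Gfun τ) := hasSum_jacobiTheta₂'_term _ hτ
  set g : ℕ → ℂ := fun n => f n + f (-(n + 1)) with hgdef
  have hg : HasSum g (Gfun τ) := hS.nat_add_neg_add_one
  set r : ℝ := Real.exp (-π * τ.im) with hr
  have hr0 : 0 < r := Real.exp_pos _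
  have hr1 : r < 1 := Real.exp_lt_one_iff.mpr (by nlinarith [Real.pi_pos])
  -- norm of individual terms
  have hnorm : ∀ (m : ℤ) (k : ℕ), (m ^ 2 + m = (k : ℤ)) →
      ‖f m‖ = 2 * π * |(m : ℝ)| * r ^ k := by
    intro m k hk
    have hw : (2 * ↑π * I * (m : ℂ) * ((1 + τ) / 2) + ↑π * I * (m : ℂ) ^ 2 * τ)
        = ((π * m : ℝ) : ℂ) * I + ((π * ((m : ℝ) ^ 2 + (m : ℝ)) : ℝ) : ℂ) * (τ * I) := by
      push_cast; ring
    rw [hf]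
    simp only [jacobiTheta₂'_term, jacobiTheta₂_term]
    rw [norm_mul]
    have hre : ∀ c d : ℝ, (((c : ℝ) : ℂ) * I + ((d : ℝ) : ℂ) * (τ * I)).re = -(d * τ.im) := by
      intro c d
      simp [Complex.add_re, Complex.mul_re, Complex.mul_im]
    have hkr : (m : ℝ) ^ 2 + (m : ℝ) = (k : ℝ) := by
      have := congrArg (Int.cast : ℤ → ℝ) hk
      push_cast at this; exact this
    have hB : ‖cexp (2 * ↑π * I * (m : ℂ) * ((1 + τ) / 2) + ↑π * I * (m : ℂ) ^ 2 * τ)‖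
        = r ^ k := by
      rw [hw, Complex.norm_exp, hre, hkr,
        show -(π * (k : ℝ) * τ.im) = (k : ℕ) * (-π * τ.im) by push_cast; ring,
        Real.exp_nat_mul, ← hr]
    have hA : ‖2 * (π : ℂ) * I * (m : ℂ)‖ = 2 * π * |(m : ℝ)| := by
      simp [map_mul,
        abs_of_pos Real.pi_pos]
    rw [hA, hB]
  -- value of g 0
  have hf0 : f 0 = 0 := by simp [hf, jacobiTheta₂'_term]
  have hfm1 : f (-1) = 2 * π * I := by
    rw [hf]
    simp only [jacobiTheta₂'_term, jacobiTheta₂_term]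
    have he : (2 * ↑π * I * ((-1 : ℤ) : ℂ) * ((1 + τ) / 2) + ↑π * I * ((-1 : ℤ) : ℂ) ^ 2 * τ)
        = -(↑π * I) := by push_cast; ring
    rw [he, Complex.exp_neg, Complex.exp_pi_mul_I]
    push_cast
    field_simp
  have hg0 : g 0 = 2 * π * I := by
    show f ((0 : ℕ) : ℤ) + f (-(((0 : ℕ) : ℤ) + 1)) = _
    norm_num [hf0, hfm1]
  -- bound on tail terms
  set x : ℝ := 3 * r ^ 2 with hx
  have hx0 : 0 < x := by positivity
  have hx1 : x < 1 / 2 := by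
    have h6 : (6 : ℝ) < Real.exp 3 := by
      have h1 := Real.exp_one_gt_d9
      have : (2.7182818283 : ℝ) ^ 3 < (Real.exp 1) ^ 3 := by
        apply pow_lt_pow_left₀ h1 (by norm_num) (by norm_num)
      have he3 : Real.exp 3 = (Real.exp 1) ^ 3 := by
        rw [← Real.exp_nat_mul]; norm_num
      nlinarith
    have hmono : r ^ 2 ≤ Real.exp (-3) := by
      rw [hr, ← Real.exp_nat_mul]
      apply Real.exp_le_exp.mpr
      have := Real.pi_gt_three
      push_cast
      nlinarith
    have hlt : Real.exp (-3) < 1 / 6 := by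
      rw [Real.exp_neg, show (1 : ℝ) / 6 = 6⁻¹ by norm_num,
        inv_lt_inv₀ (Real.exp_pos 3) (by norm_num)]
      exact h6
    nlinarith
  have hb : ∀ n : ℕ, ‖g (n + 1)‖ ≤ 2 * π * x ^ (n + 1) := by
    intro n
    have h1 : ‖f ((n : ℤ) + 1)‖ = 2 * π * ((n : ℝ) + 1) * r ^ ((n + 1) * (n + 2)) := by
      rw [hnorm ((n : ℤ) + 1) ((n + 1) * (n + 2)) (by push_cast; ring)]
      congr 1
      · congr 1
        rw [abs_of_pos (by positivity : (0:ℝ) < (((n : ℤ) + 1 : ℤ) : ℝ))]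
        push_cast; ring
    have h2 : ‖f (-((n : ℤ) + 2))‖ = 2 * π * ((n : ℝ) + 2) * r ^ ((n + 1) * (n + 2)) := by
      rw [hnorm (-((n : ℤ) + 2)) ((n + 1) * (n + 2)) (by push_cast; ring)]
      congr 1
      congr 1
      rw [show ((-((n : ℤ) + 2) : ℤ) : ℝ) = -((n : ℝ) + 2) by push_cast; ring, abs_neg,
        abs_of_pos (by positivity)]
    have hgn : g (n + 1) = f ((n : ℤ) + 1) + f (-((n : ℤ) + 2)) := by
      show f (((n + 1 : ℕ) : ℤ)) + f (-(((n + 1 : ℕ) : ℤ) + 1)) = _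
      rw [show ((n + 1 : ℕ) : ℤ) = (n : ℤ) + 1 by push_cast; ring]
      congr 2
    have hpow : r ^ ((n + 1) * (n + 2)) ≤ r ^ (2 * (n + 1)) :=
      pow_le_pow_of_le_one hr0.le hr1.le (by nlinarith)
    have h3 : (2 * (n : ℝ) + 3) ≤ 3 ^ (n + 1) := two_n_three_le n
    calc ‖g (n + 1)‖ ≤ ‖f ((n : ℤ) + 1)‖ + ‖f (-((n : ℤ) + 2))‖ := by
          rw [hgn]; exact norm_add_le _ _
      _ = 2 * π * (2 * (n : ℝ) + 3) * r ^ ((n + 1) * (n + 2)) := by rw [h1, h2]; ring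
      _ ≤ 2 * π * (3 ^ (n + 1)) * r ^ (2 * (n + 1)) := by
          apply mul_le_mul (by nlinarith [Real.pi_pos]) hpow (by positivity) (by positivity)
      _ = 2 * π * x ^ (n + 1) := by
          rw [hx, mul_pow, pow_mul]
          ring
  -- summability and tail bound
  have hgeo : Summable (fun n : ℕ => 2 * π * x ^ (n + 1)) := by
    apply Summable.mul_left
    exact ((summable_geometric_of_lt_one hx0.le (by linarith)).comp_injective
      (add_left_injective 1))
  have hsumnorm : Summable (fun n : ℕ => ‖g (n + 1)‖) :=
    Summable.of_nonneg_of_le (fun n => norm_nonneg _) hb hgeo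
  have hshift : HasSum (fun n : ℕ => g (n + 1)) (Gfun τ - ∑ i ∈ Finset.range 1, g i) :=
    (hasSum_nat_add_iff' 1).mpr hg
  have h1x : 0 < 1 - x := by linarith
  have htail : ‖Gfun τ - g 0‖ ≤ 2 * π * (x * (1 - x)⁻¹) := by
    have h1 : Gfun τ - g 0 = ∑' n : ℕ, g (n + 1) := by
      rw [hshift.tsum_eq, Finset.sum_range_one]
    rw [h1]
    calc ‖∑' n : ℕ, g (n + 1)‖ ≤ ∑' n : ℕ, ‖g (n + 1)‖ := norm_tsum_le_tsum_norm hsumnorm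
      _ ≤ ∑' n : ℕ, 2 * π * x ^ (n + 1) := Summable.tsum_le_tsum hb hsumnorm hgeo
      _ = 2 * π * (x * (1 - x)⁻¹) := by
          rw [tsum_mul_left]
          congr 1
          have : ∀ n : ℕ, x ^ (n + 1) = x ^ n * x := fun n => pow_succ x n
          rw [tsum_congr this, tsum_mul_right,
            tsum_geometric_of_lt_one hx0.le (by linarith)]
          ring
  intro h0
  rw [h0, zero_sub, norm_neg, hg0] at htail
  have hng : ‖2 * (π : ℂ) * I‖ = 2 * π := by
    simp [map_mul,
      abs_of_pos Real.pi_pos]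
  rw [hng] at htail
  have hfrac : x * (1 - x)⁻¹ < 1 := by
    rw [← div_eq_mul_inv, div_lt_one h1x]
    linarith
  nlinarith [Real.pi_pos]



lemma Gfun_ne_zero (τ : ℂ) (hτ : 0 < τ.im) : Gfun τ ≠ 0 := by
  suffices H : ∀ k : ℕ, ∀ σ : ℂ, 0 < σ.im → 1 / 2 ≤ 2 ^ k * σ.im → Gfun σ ≠ 0 by
    obtain ⟨k, hk⟩ := pow_unbounded_of_one_lt (1 / (2 * τ.im)) (by norm_num : (1 : ℝ) < 2)
    refine H k τ hτ ?_
    rw [div_lt_iff₀ (by linarith)] at hk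
    nlinarith [pow_pos (by norm_num : (0 : ℝ) < 2) k]
  intro k
  induction k with
  | zero => intro σ h0 h1; exact Gfun_base σ (by simpa using h1)
  | succ k ih =>
    intro σ h0 h1
    by_cases hcase : 1 / 2 ≤ 2 ^ k * σ.im
    · exact ih σ h0 hcase
    · push_neg at hcase
      have h2k : (1 : ℝ) ≤ 2 ^ k := one_le_pow₀ (by norm_num)
      have h2k0 : (0 : ℝ) < 2 ^ k := by linarith
      have him : σ.im < 1 / 2 := by nlinarith
      set m : ℤ := round σ.re with hm
      set σ₁ : ℂ := σ - (m : ℂ) with hσ1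
      have hre1 : |σ₁.re| ≤ 1 / 2 := by
        have : σ₁.re = σ.re - round σ.re := by
          simp [hσ1, Complex.sub_re, Complex.intCast_re, hm]
        rw [this]
        exact abs_sub_round σ.re
      have him1 : σ₁.im = σ.im := by simp [hσ1]
      have hG1 : Gfun σ = Gfun σ₁ := by
        have h := Gfun_int_add σ₁ m
        rw [show σ₁ + (m : ℂ) = σ by rw [hσ1]; ring] at h
        exact h
      have hσ1ne : σ₁ ≠ 0 := by
        intro h
        rw [h] at him1
        simp at him1
        exact absurd him1.symm (ne_of_gt h0)
      have hns0 : 0 < Complex.normSq σ₁ := Complex.normSq_pos.mpr hσ1ne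
      have hns : Complex.normSq σ₁ ≤ 1 / 2 := by
        rw [Complex.normSq_apply]
        have h1' : σ₁.re ^ 2 ≤ 1 / 4 := by
          have := _root_.sq_abs σ₁.re
          nlinarith [abs_nonneg σ₁.re]
        have h2' : σ₁.im ^ 2 ≤ 1 / 4 := by rw [him1]; nlinarith
        nlinarith
      have him2 : (-1 / σ₁).im = σ.im / Complex.normSq σ₁ := by
        rw [neg_div, one_div, Complex.neg_im, Complex.inv_im, him1]
        field_simp
      have h02 : 0 < (-1 / σ₁).im := by rw [him2]; exact div_pos h0 hns0
      have hge : 1 / 2 ≤ 2 ^ k * (-1 / σ₁).im := by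
        rw [him2]
        have hd : 2 * σ.im ≤ σ.im / Complex.normSq σ₁ := by
          rw [le_div_iff₀ hns0]
          nlinarith
        calc (1 : ℝ) / 2 ≤ 2 ^ (k + 1) * σ.im := h1
          _ = 2 ^ k * (2 * σ.im) := by ring
          _ ≤ 2 ^ k * (σ.im / Complex.normSq σ₁) := by
              apply mul_le_mul_of_nonneg_left hd (le_of_lt h2k0)
      rw [hG1]
      exact Gfun_S_step σ₁ (him1 ▸ h0) (ih (-1 / σ₁) h02 hge)

/-- The derivative of z ↦ θ₁(z;τ) at any lattice point m + n·τ is nonzero;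
in particular every zero of θ₁(·;τ) is simple. -/
theorem theta1_deriv_ne_zero_at_lattice (τ : ℂ) (hτ : 0 < τ.im) (m n : ℤ) :
    deriv (fun z : ℂ => theta1 z τ) ((m : ℂ) + (n : ℂ) * τ) ≠ 0 := by
  set p : ℂ := (m : ℂ) + (n : ℂ) * τ with hp
  have h2 : HasDerivAt (fun z : ℂ => jacobiTheta₂ (z + (1 + τ) / 2) τ)
      (jacobiTheta₂' (p + (1 + τ) / 2) τ) p := by
    have h := hasDerivAt_jacobiTheta₂_fst (p + (1 + τ) / 2) hτ
    have hid : HasDerivAt (fun z : ℂ => z + (1 + τ) / 2) 1 p := (hasDerivAt_id p).add_const _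
    have H := HasDerivAt.comp p h hid; rw [mul_one] at H; exact H
  have he : HasDerivAt (fun z : ℂ => I * (π : ℂ) * τ / 4 + I * (π : ℂ) * z)
      (I * (π : ℂ)) p := by
    simpa using ((hasDerivAt_id p).const_mul (I * (π : ℂ))).const_add (I * (π : ℂ) * τ / 4)
  have h1 : HasDerivAt (fun z : ℂ => -I * Complex.exp (I * (π : ℂ) * τ / 4 + I * (π : ℂ) * z))
      (-I * (Complex.exp (I * (π : ℂ) * τ / 4 + I * (π : ℂ) * p) * (I * (π : ℂ)))) p :=
    he.cexp.const_mul (-I)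
  have H := h1.mul h2
  have hfun : (fun z : ℂ => theta1 z τ)
      = fun z : ℂ => (-I * Complex.exp (I * (π : ℂ) * τ / 4 + I * (π : ℂ) * z)) *
          jacobiTheta₂ (z + (1 + τ) / 2) τ := rfl
  rw [hfun, show deriv (fun z : ℂ => (-I * Complex.exp (I * (π : ℂ) * τ / 4 + I * (π : ℂ) * z)) *
      jacobiTheta₂ (z + (1 + τ) / 2) τ) p = _ from H.deriv]
  -- the theta value at the lattice point vanishes
  have hshift : p + (1 + τ) / 2 = ((1 + τ) / 2 + (n : ℂ) * τ) + (m : ℤ) := by push_cast; ring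
  obtain ⟨hzero, c, hc, hc'⟩ := theta2_lattice τ n
  have hz : jacobiTheta₂ (p + (1 + τ) / 2) τ = 0 := by
    rw [hshift, theta2_int_add]
    exact_mod_cast hzero
  have hd : jacobiTheta₂' (p + (1 + τ) / 2) τ = c * Gfun τ := by
    rw [hshift, theta2'_int_add]
    exact_mod_cast hc'
  rw [hz, hd, mul_zero, zero_add]
  exact mul_ne_zero (mul_ne_zero (neg_ne_zero.mpr I_ne_zero) (Complex.exp_ne_zero _))
    (mul_ne_zero hc (Gfun_ne_zero τ hτ))

end ThetaAux
end

section
/- Order-2 symmetry of the squared Gauss map about the symmetry center τ/6: let τ ∈ ℂ with Im τ > 0 and let z ∈ ℂ satisfy θ₁(3z; 3τ) ≠ 0 and θ₁(3z − τ; 3τ) ≠ 0. Then G²(z) · G²(τ/3 − z) = exp(4πi τ/3); in particular the product G²(z)·G²(τ/3 − z) is a nonzero constant independent of z, so that under the involution z ↦ τ/3 − z the Gauss map G transforms as G ↦ (const)/G. -/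
open Complex

/-- θ₁ is odd in z. -/
lemma theta1_neg (z τ : ℂ) : theta1 (-z) τ = - theta1 z τ := by
  unfold theta1
  have h : (-z + (1 + τ) / 2) = (-(z + (1 + τ) / 2) + 1) + τ := by ring
  rw [h, jacobiTheta₂_add_left', jacobiTheta₂_add_left, jacobiTheta₂_neg_left]
  have he : Complex.exp (I * (Real.pi : ℂ) * τ / 4 + I * (Real.pi : ℂ) * (-z)) *
      Complex.exp (-(Real.pi : ℂ) * I * (τ + 2 * (-(z + (1 + τ) / 2) + 1))) =
      -Complex.exp (I * (Real.pi : ℂ) * τ / 4 + I * (Real.pi : ℂ) * z) := by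
    rw [← Complex.exp_add]
    have h2 : (I * (Real.pi : ℂ) * τ / 4 + I * (Real.pi : ℂ) * (-z)) +
        (-(Real.pi : ℂ) * I * (τ + 2 * (-(z + (1 + τ) / 2) + 1)))
        = (I * (Real.pi : ℂ) * τ / 4 + I * (Real.pi : ℂ) * z) + (-((Real.pi : ℂ) * I)) := by
      ring
    rw [h2, Complex.exp_add, Complex.exp_neg, Complex.exp_pi_mul_I]
    ring
  calc -I * Complex.exp (I * (Real.pi : ℂ) * τ / 4 + I * (Real.pi : ℂ) * (-z)) *
      (Complex.exp (-(Real.pi : ℂ) * I * (τ + 2 * (-(z + (1 + τ) / 2) + 1))) *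
        jacobiTheta₂ (z + (1 + τ) / 2) τ)
      = -I * (Complex.exp (I * (Real.pi : ℂ) * τ / 4 + I * (Real.pi : ℂ) * (-z)) *
          Complex.exp (-(Real.pi : ℂ) * I * (τ + 2 * (-(z + (1 + τ) / 2) + 1)))) *
          jacobiTheta₂ (z + (1 + τ) / 2) τ := by ring
    _ = _ := by rw [he]; ring

/-- The squared Gauss map of the gyrating H'-T surface:
G²(z) = −exp(iπτ/3)·exp(2πi z)·θ₁(3z; 3τ) / θ₁(3z − τ; 3τ). -/
noncomputable def Gsq (τ z : ℂ) : ℂ :=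
  -Complex.exp (I * (Real.pi : ℂ) * τ / 3) * Complex.exp (2 * (Real.pi : ℂ) * I * z) *
    theta1 (3 * z) (3 * τ) / theta1 (3 * z - τ) (3 * τ)

/-- Order-2 symmetry of G² about the symmetry center τ/6:
G²(z)·G²(τ/3 − z) = exp(4πiτ/3), whenever the relevant theta values are nonzero. -/
theorem Gsq_order_two_symmetry (τ : ℂ) (hτ : 0 < τ.im) (z : ℂ)
    (h1 : theta1 (3 * z) (3 * τ) ≠ 0) (h2 : theta1 (3 * z - τ) (3 * τ) ≠ 0) :
    Gsq τ z * Gsq τ (τ / 3 - z) =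
      Complex.exp (4 * (Real.pi : ℂ) * I * τ / 3) := by
  unfold Gsq
  rw [show (3 : ℂ) * (τ / 3 - z) = -(3 * z - τ) by ring,
      show -(3 * z - τ) - τ = -(3 * z) by ring, theta1_neg, theta1_neg]
  rw [div_mul_div_comm, div_eq_iff (mul_ne_zero h2 (neg_ne_zero.mpr h1))]
  have he : Complex.exp (4 * (Real.pi : ℂ) * I * τ / 3) =
      Complex.exp (I * (Real.pi : ℂ) * τ / 3) * Complex.exp (2 * (Real.pi : ℂ) * I * z) *
      (Complex.exp (I * (Real.pi : ℂ) * τ / 3) * Complex.exp (2 * (Real.pi : ℂ) * I * (τ / 3 - z))) := by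
    rw [← Complex.exp_add, ← Complex.exp_add, ← Complex.exp_add]
    congr 1
    ring
  rw [he]
  ring
end

section
/- Elementary geometry on the circular arc |τ − 1/3| = 1/3 (used in the existence proof to show θ_v > θ_h there): for every τ ∈ ℂ with Im τ > 0 and |τ − 1/3| = 1/3, one has arg(τ − 1) − π/2 > arg τ, i.e. θ_v(τ) > arg τ. -/
open Complex

/-- Elementary geometry on the circular arc |τ − 1/3| = 1/3:
for τ in the upper half-plane on this arc, θ_v(τ) = arg(τ − 1) − π/2 > arg τ. -/
theorem theta_v_gt_arg_on_arc (τ : ℂ) (hτ : 0 < τ.im)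
    (harc : ‖τ - 1 / 3‖ = 1 / 3) :
    Complex.arg (τ - 1) - Real.pi / 2 > Complex.arg τ := by
  set x := τ.re with hx
  set y := τ.im with hy
  -- circle equation
  have hcirc : x ^ 2 + y ^ 2 = 2 / 3 * x := by
    have h2 : Complex.normSq (τ - 1 / 3) = 1 / 9 := by
      rw [← Complex.sq_norm, harc]; norm_num
    rw [Complex.normSq_apply] at h2
    simp only [Complex.sub_re, Complex.sub_im] at h2
    have h3 : (1 / 3 : ℂ).re = 1 / 3 := by norm_num
    have h4 : (1 / 3 : ℂ).im = 0 := by norm_num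
    rw [h3, h4] at h2
    nlinarith [h2]
  have hy2 : 0 < y ^ 2 := pow_pos hτ 2
  have hxpos : 0 < x := by nlinarith
  have hxlt : x < 2 / 3 := by nlinarith
  have hx1 : x - 1 < 0 := by linarith
  -- arg τ = arctan (y / x)
  have hargτ : Complex.arg τ = Real.arctan (y / x) := by
    have hb : |Complex.arg τ| < Real.pi / 2 :=
      Complex.abs_arg_lt_pi_div_two_iff.mpr (Or.inl hxpos)
    rw [abs_lt] at hb
    rw [← Complex.tan_arg τ, Real.arctan_tan hb.1 hb.2]
  -- arg (τ - 1) = arctan (y / (x - 1)) + π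
  have hre1 : (τ - 1).re = x - 1 := by simp [hx]
  have him1 : (τ - 1).im = y := by simp [hy]
  have hargτ1 : Complex.arg (τ - 1) = Real.arctan (y / (x - 1)) + Real.pi := by
    have hlt : Complex.arg (τ - 1) ≤ Real.pi := Complex.arg_le_pi _
    have hgt : Real.pi / 2 < Complex.arg (τ - 1) := by
      by_contra h
      push_neg at h
      have := Complex.arg_le_pi_div_two_iff.mp h
      rcases this with h' | h'
      · rw [hre1] at h'; linarith
      · rw [him1] at h'; linarith
    have hpi : 0 < Real.pi := Real.pi_pos
    have h1 : -(Real.pi / 2) < Complex.arg (τ - 1) - Real.pi := by linarith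
    have h2 : Complex.arg (τ - 1) - Real.pi < Real.pi / 2 := by linarith
    have := Real.arctan_tan h1 h2
    rw [Real.tan_sub_pi, Complex.tan_arg, hre1, him1] at this
    linarith [this]
  rw [hargτ, hargτ1]
  -- reduce to arctan inequality
  have h1x : 0 < 1 - x := by linarith
  have hu : 0 < y / (1 - x) := div_pos hτ h1x
  have hne : (1 - x) ≠ 0 := ne_of_gt h1x
  have hodd : Real.arctan (y / (x - 1)) = - Real.arctan (y / (1 - x)) := by
    rw [← Real.arctan_neg]
    congr 1
    have hne' : (x - 1) ≠ 0 := ne_of_lt hx1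
    field_simp
    ring
  have hinv : Real.arctan ((1 - x) / y) = Real.pi / 2 - Real.arctan (y / (1 - x)) := by
    have := Real.arctan_inv_of_pos hu
    rwa [show (y / (1 - x))⁻¹ = (1 - x) / y by field_simp] at this
  have hmono : Real.arctan (y / x) < Real.arctan ((1 - x) / y) := by
    apply Real.arctan_strictMono
    rw [div_lt_div_iff₀ hxpos hτ]
    nlinarith
  rw [hodd]
  rw [hinv] at hmono
  linarith
end
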